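/- arXiv:2110.07080 — 2 statements merged into one kernel-verified Lean document; each statement's English description precedes it below -/
import Mathlib

section
/- Let N' be the 6×6 rational matrix with rows (0,2,1,1,0,0), (−2,0,1,1,0,0), (1,1,0,0,0,1), (1,1,0,0,0,−1), (0,0,1,−1,0,0), (0,0,0,0,0,0), and let u₁ := 3e₁ − i·e₂ + 2e₃ + 2e₄ and u₂ := e₆ in ℂ⁶ (e₁,…,e₆ the standard basis, i the imaginary unit). Extend Q_w ℂ-bilinearly, i.e., Q_w(x,y) := xᵀ·Q_w·y for x, y ∈ ℂ⁶, and let conj denote componentwise complex conjugation. Then for every real number y: −Q_w(exp(i·y·N')·u₁, conj(exp(i·y·N')·u₁)) = 2·(2y+1)², −Q_w(exp(i·y·N')·u₂, conj(exp(i·y·N')·u₂)) = 4·y², and Q_w(exp(i·y·N')·u₁, conj(exp(i·y·N')·u₂)) = 0, where exp denotes the matrix exponential. -/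
open Matrix NormedSpace

/-- The form `Q_w` of Watanabe's (2,2,2) example, as a complex matrix. -/
def QwC : Matrix (Fin 6) (Fin 6) ℂ :=
  !![-1, 0, 0, 0, 0, 0;
     0, -1, 0, 0, 0, 0;
     0, 0, 0, 1, 0, 0;
     0, 0, 1, 0, 0, 0;
     0, 0, 0, 0, 0, 1;
     0, 0, 0, 0, 1, 0]

/-- The ℂ-bilinear extension of `Q_w`: `Q_w(x,y) = xᵀ·Q_w·y`. -/
noncomputable def Qwbil (x y : Fin 6 → ℂ) : ℂ := x ⬝ᵥ (QwC *ᵥ y)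

/-- The matrix `N'` of Appendix A.1. -/
def N' : Matrix (Fin 6) (Fin 6) ℂ :=
  !![0, 2, 1, 1, 0, 0;
     -2, 0, 1, 1, 0, 0;
     1, 1, 0, 0, 0, 1;
     1, 1, 0, 0, 0, -1;
     0, 0, 1, -1, 0, 0;
     0, 0, 0, 0, 0, 0]

/-- `u₁ = 3e₁ − i e₂ + 2e₃ + 2e₄`. -/
def u1 : Fin 6 → ℂ := ![3, -Complex.I, 2, 2, 0, 0]

/-- `u₂ = e₆`. -/
def u2 : Fin 6 → ℂ := ![0, 0, 0, 0, 0, 1]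

section Aux

set_option maxHeartbeats 1600000

@[simp] lemma consval_2_1 {α : Type*} (a : α) (u : Fin 1 → α) : vecCons a u (1 : Fin 2) = u 0 := rfl
@[simp] lemma consval_3_1 {α : Type*} (a : α) (u : Fin 2 → α) : vecCons a u (1 : Fin 3) = u 0 := rfl
@[simp] lemma consval_3_2 {α : Type*} (a : α) (u : Fin 2 → α) : vecCons a u (2 : Fin 3) = u 1 := rfl
@[simp] lemma consval_4_1 {α : Type*} (a : α) (u : Fin 3 → α) : vecCons a u (1 : Fin 4) = u 0 := rfl
@[simp] lemma consval_4_2 {α : Type*} (a : α) (u : Fin 3 → α) : vecCons a u (2 : Fin 4) = u 1 := rfl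
@[simp] lemma consval_4_3 {α : Type*} (a : α) (u : Fin 3 → α) : vecCons a u (3 : Fin 4) = u 2 := rfl
@[simp] lemma consval_5_1 {α : Type*} (a : α) (u : Fin 4 → α) : vecCons a u (1 : Fin 5) = u 0 := rfl
@[simp] lemma consval_5_2 {α : Type*} (a : α) (u : Fin 4 → α) : vecCons a u (2 : Fin 5) = u 1 := rfl
@[simp] lemma consval_5_3 {α : Type*} (a : α) (u : Fin 4 → α) : vecCons a u (3 : Fin 5) = u 2 := rfl
@[simp] lemma consval_5_4 {α : Type*} (a : α) (u : Fin 4 → α) : vecCons a u (4 : Fin 5) = u 3 := rfl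
@[simp] lemma consval_6_1 {α : Type*} (a : α) (u : Fin 5 → α) : vecCons a u (1 : Fin 6) = u 0 := rfl
@[simp] lemma consval_6_2 {α : Type*} (a : α) (u : Fin 5 → α) : vecCons a u (2 : Fin 6) = u 1 := rfl
@[simp] lemma consval_6_3 {α : Type*} (a : α) (u : Fin 5 → α) : vecCons a u (3 : Fin 6) = u 2 := rfl
@[simp] lemma consval_6_4 {α : Type*} (a : α) (u : Fin 5 → α) : vecCons a u (4 : Fin 6) = u 3 := rfl
@[simp] lemma consval_6_5 {α : Type*} (a : α) (u : Fin 5 → α) : vecCons a u (5 : Fin 6) = u 4 := rfl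

lemma I_cube : Complex.I ^ 3 = -Complex.I := by
  rw [pow_succ, Complex.I_sq]; ring

lemma exp_of_cube_zero (A : Matrix (Fin 6) (Fin 6) ℂ) (hA : A ^ 3 = 0) :
    exp A = 1 + A + (2⁻¹ : ℂ) • (A * A) := by
  rw [exp_eq_tsum ℂ]
  beta_reduce
  rw [tsum_eq_sum (s := Finset.range 3)]
  · simp [Finset.sum_range_succ, Nat.factorial, pow_two]
  · intro n hn
    have h3 : 3 ≤ n := by simpa using hn
    have : A ^ n = A ^ 3 * A ^ (n - 3) := by rw [← pow_add]; congr 1; omega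
    simp [this, hA]

/-- The square of `N'`. -/
def N2 : Matrix (Fin 6) (Fin 6) ℂ :=
  !![-2, 2, 2, 2, 0, 0;
     2, -2, -2, -2, 0, 0;
     -2, 2, 2, 2, 0, 0;
     -2, 2, 2, 2, 0, 0;
     0, 0, 0, 0, 0, 2;
     0, 0, 0, 0, 0, 0]

lemma N'sq : N' * N' = N2 := by
  ext i j
  fin_cases i <;> fin_cases j <;>
    simp [N', N2, Matrix.mul_apply, Fin.sum_univ_six, Matrix.vecHead, Matrix.vecTail] <;> norm_num

lemma N'cube : N' ^ 3 = 0 := by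
  rw [pow_succ, pow_two, N'sq]
  ext i j
  fin_cases i <;> fin_cases j <;>
    simp [N', N2, Matrix.mul_apply, Fin.sum_univ_six, Matrix.vecHead, Matrix.vecTail] <;> norm_num

lemma exp_smul_N' (s : ℂ) :
    exp (s • N') = 1 + s • N' + ((s ^ 2 / 2) : ℂ) • N2 := by
  have h3 : (s • N') ^ 3 = 0 := by rw [smul_pow, N'cube, smul_zero]
  rw [exp_of_cube_zero _ h3, smul_mul_smul_comm, N'sq, smul_smul]
  ring_nf

lemma expv1 (y : ℝ) :
    exp ((Complex.I * (y : ℂ)) • N') *ᵥ u1 =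
      ![((3 : ℂ) + 2*y - y^2) + (4*y + y^2) * Complex.I,
        ((y : ℂ)^2) + (-1 - 2*y - y^2) * Complex.I,
        ((2 : ℂ) + y - y^2) + (3*y + y^2) * Complex.I,
        ((2 : ℂ) + y - y^2) + (3*y + y^2) * Complex.I,
        0, 0] := by
  rw [exp_smul_N']
  ext i
  fin_cases i <;>
    simp [N', N2, u1, Matrix.mulVec, Matrix.mul_apply, dotProduct, Fin.sum_univ_six,
      Matrix.add_apply, Matrix.smul_apply, Matrix.one_apply, Matrix.vecHead, Matrix.vecTail] <;>
    ring_nf <;> simp [Complex.I_sq, I_cube] <;> ring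

lemma expv2 (y : ℝ) :
    exp ((Complex.I * (y : ℂ)) • N') *ᵥ u2 =
      ![0, 0, (y : ℂ) * Complex.I, -((y : ℂ) * Complex.I), -((y : ℂ)^2), 1] := by
  rw [exp_smul_N']
  ext i
  fin_cases i <;>
    simp [N', N2, u2, Matrix.mulVec, Matrix.mul_apply, dotProduct, Fin.sum_univ_six,
      Matrix.add_apply, Matrix.smul_apply, Matrix.one_apply, Matrix.vecHead, Matrix.vecTail] <;>
    ring_nf <;> simp [Complex.I_sq, I_cube] <;> ring

end Aux

set_option maxHeartbeats 1600000 in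
/-- The Hodge–Riemann positivity identities of Appendix A.1 for the second nilpotent
orbit generated by `N₁ + N₂` and `N'`: for every real `y`,
`−Q_w(e^{iyN'}u₁, conj(e^{iyN'}u₁)) = 2(2y+1)²`,
`−Q_w(e^{iyN'}u₂, conj(e^{iyN'}u₂)) = 4y²`, and
`Q_w(e^{iyN'}u₁, conj(e^{iyN'}u₂)) = 0`. -/
theorem stmt_13 (y : ℝ) :
    -(Qwbil (exp ((Complex.I * (y : ℂ)) • N') *ᵥ u1)
        (star (exp ((Complex.I * (y : ℂ)) • N') *ᵥ u1)))
      = 2 * (2 * (y : ℂ) + 1) ^ 2 ∧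
    -(Qwbil (exp ((Complex.I * (y : ℂ)) • N') *ᵥ u2)
        (star (exp ((Complex.I * (y : ℂ)) • N') *ᵥ u2)))
      = 4 * (y : ℂ) ^ 2 ∧
    Qwbil (exp ((Complex.I * (y : ℂ)) • N') *ᵥ u1)
        (star (exp ((Complex.I * (y : ℂ)) • N') *ᵥ u2)) = 0 := by
  rw [expv1, expv2]
  refine ⟨?_, ?_, ?_⟩ <;>
    simp [Qwbil, QwC, Matrix.mulVec, dotProduct, Fin.sum_univ_six, Pi.star_apply,
      Matrix.vecHead, Matrix.vecTail, Complex.star_def, map_add, _root_.map_mul, map_sub, map_neg,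
      Complex.conj_ofReal, Complex.conj_I, map_pow, map_ofNat] <;>
    ring_nf <;> simp [Complex.I_sq, I_cube] <;> ring
end

section
/- Let N be the 6×6 rational matrix whose only nonzero entries are N₁₂ = −1, N₁₃ = −1, N₂₄ = −22, N₂₅ = −13, N₃₄ = −13, N₃₅ = −22, N₄₆ = 1, N₅₆ = 1 (a nilpotent matrix, so exp(N) is a polynomial in N). Then for every complex number a₀, with v := a₀·e₁ + e₆ in ℂ⁶ (e₁,…,e₆ the standard basis): (N_x·exp(N)·v)ᵀ · Q · (exp(N)·N_x·v) = 2; in particular this pairing is nonzero. -/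
open Matrix NormedSpace

/-- The symplectic form `Q` of the (1,2,2,1) family (eq. (5.3)), as a complex matrix. -/
def QC : Matrix (Fin 6) (Fin 6) ℂ :=
  !![0, 0, 0, 0, 0, -1;
     0, 0, 0, 0, -1, 0;
     0, 0, 0, -1, 0, 0;
     0, 0, 1, 0, 0, 0;
     0, 1, 0, 0, 0, 0;
     1, 0, 0, 0, 0, 0]

/-- The monodromy logarithm `N_x` (modulo weight-filtration level, eq. (6.6)). -/
def NxC : Matrix (Fin 6) (Fin 6) ℂ :=
  !![0, -1, 0, 0, 0, 0;
     0, 0, 0, -10, -5, 0;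
     0, 0, 0, -10, -10, 0;
     0, 0, 0, 0, 0, 0;
     0, 0, 0, 0, 0, 1;
     0, 0, 0, 0, 0, 0]

/-- The nilpotent matrix `N` of eq. (8.14). -/
def NC : Matrix (Fin 6) (Fin 6) ℂ :=
  !![0, -1, -1, 0, 0, 0;
     0, 0, 0, -22, -13, 0;
     0, 0, 0, -13, -22, 0;
     0, 0, 0, 0, 0, 1;
     0, 0, 0, 0, 0, 1;
     0, 0, 0, 0, 0, 0]

section vecsimp
variable {α : Type*}
@[simp] lemma cv1' (x : α) (u : Fin 1 → α) : Matrix.vecCons x u 1 = u 0 := rfl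
@[simp] lemma cv2' (x : α) (u : Fin 2 → α) : Matrix.vecCons x u 2 = u 1 := rfl
@[simp] lemma cv3' (x : α) (u : Fin 3 → α) : Matrix.vecCons x u 3 = u 2 := rfl
@[simp] lemma cv4' (x : α) (u : Fin 4 → α) : Matrix.vecCons x u 4 = u 3 := rfl
@[simp] lemma cv5' (x : α) (u : Fin 5 → α) : Matrix.vecCons x u 5 = u 4 := rfl
@[simp] lemma cv2'' (x : α) (u : Fin 2 → α) : Matrix.vecCons x u 1 = u 0 := rfl
@[simp] lemma cv3'' (x : α) (u : Fin 3 → α) : Matrix.vecCons x u 1 = u 0 := rfl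
@[simp] lemma cv4'' (x : α) (u : Fin 4 → α) : Matrix.vecCons x u 1 = u 0 := rfl
@[simp] lemma cv5'' (x : α) (u : Fin 5 → α) : Matrix.vecCons x u 1 = u 0 := rfl
end vecsimp

/-- `NC ^ 2`. -/
def NC2 : Matrix (Fin 6) (Fin 6) ℂ :=
  !![0, 0, 0, 35, 35, 0;
     0, 0, 0, 0, 0, -35;
     0, 0, 0, 0, 0, -35;
     0, 0, 0, 0, 0, 0;
     0, 0, 0, 0, 0, 0;
     0, 0, 0, 0, 0, 0]

/-- `NC ^ 3`. -/
def NC3 : Matrix (Fin 6) (Fin 6) ℂ :=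
  !![0, 0, 0, 0, 0, 70;
     0, 0, 0, 0, 0, 0;
     0, 0, 0, 0, 0, 0;
     0, 0, 0, 0, 0, 0;
     0, 0, 0, 0, 0, 0;
     0, 0, 0, 0, 0, 0]

lemma hNC2 : NC * NC = NC2 := by
  ext i j
  fin_cases i <;> fin_cases j <;>
    norm_num [NC, NC2, Matrix.mul_apply, Fin.sum_univ_six, Matrix.vecHead, Matrix.vecTail, Matrix.cons_val_two, Matrix.cons_val_three, Matrix.cons_val_four]

lemma hNC3 : NC2 * NC = NC3 := by
  ext i j
  fin_cases i <;> fin_cases j <;>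
    norm_num [NC3, NC2, NC, Matrix.mul_apply, Fin.sum_univ_six, Matrix.vecHead, Matrix.vecTail, Matrix.cons_val_two, Matrix.cons_val_three, Matrix.cons_val_four]

lemma hNC4 : NC3 * NC = 0 := by
  ext i j
  fin_cases i <;> fin_cases j <;>
    norm_num [NC3, NC, Matrix.mul_apply, Fin.sum_univ_six, Matrix.vecHead, Matrix.vecTail, Matrix.cons_val_two, Matrix.cons_val_three, Matrix.cons_val_four]

lemma NCp2 : NC ^ 2 = NC2 := by rw [sq, hNC2]
lemma NCp3 : NC ^ 3 = NC3 := by rw [pow_succ, NCp2, hNC3]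
lemma NCp4 : NC ^ 4 = 0 := by rw [pow_succ, NCp3, hNC4]

lemma expNC : exp NC = 1 + NC + (2:ℂ)⁻¹ • NC2 + (6:ℂ)⁻¹ • NC3 := by
  rw [exp_eq_tsum (𝕂 := ℂ)]
  show (∑' n : ℕ, (n.factorial : ℂ)⁻¹ • NC ^ n) = _
  rw [tsum_eq_sum (s := Finset.range 4) (fun n hn => by
    have h4 : 4 ≤ n := Nat.not_lt.mp (by simpa using hn)
    obtain ⟨k, rfl⟩ := Nat.exists_eq_add_of_le h4
    rw [pow_add, NCp4, zero_mul, smul_zero])]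
  norm_num [Finset.sum_range_succ, Nat.factorial, NCp2, NCp3]

/-- `exp NC` as an explicit matrix. -/
noncomputable def EC : Matrix (Fin 6) (Fin 6) ℂ :=
  !![1, -1, -1, 35/2, 35/2, 35/3;
     0, 1, 0, -22, -13, -35/2;
     0, 0, 1, -13, -22, -35/2;
     0, 0, 0, 1, 0, 1;
     0, 0, 0, 0, 1, 1;
     0, 0, 0, 0, 0, 1]

lemma expEC : exp NC = EC := by
  rw [expNC]
  ext i j
  fin_cases i <;> fin_cases j <;>
    norm_num [NC, NC2, NC3, EC, Matrix.one_apply, Matrix.vecHead, Matrix.vecTail, Matrix.cons_val_two, Matrix.cons_val_three, Matrix.cons_val_four,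
      Fin.ext_iff]

/-- Appendix A.2: for every `a₀ ∈ ℂ` and `v = a₀e₁ + e₆`, the pairing
`(N_x·exp(N)·v)ᵀ·Q·(exp(N)·N_x·v)` equals `2`; in particular it is nonzero, so Griffiths
transversality fails for `exp(ℂN_x)F_N•`. -/
theorem stmt_15 (a₀ : ℂ) (v : Fin 6 → ℂ) (hv : v = ![a₀, 0, 0, 0, 0, 1]) :
    ((NxC * exp NC) *ᵥ v) ⬝ᵥ (QC *ᵥ ((exp NC * NxC) *ᵥ v)) = 2 ∧
      ((NxC * exp NC) *ᵥ v) ⬝ᵥ (QC *ᵥ ((exp NC * NxC) *ᵥ v)) ≠ 0 := by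
  have h : ((NxC * exp NC) *ᵥ v) ⬝ᵥ (QC *ᵥ ((exp NC * NxC) *ᵥ v)) = 2 := by
    rw [expEC, hv]
    simp only [← Matrix.mulVec_mulVec]
    norm_num [QC, NxC, EC, Matrix.mulVec, dotProduct, Fin.sum_univ_six,
      Matrix.vecHead, Matrix.vecTail, Matrix.cons_val_two, Matrix.cons_val_three, Matrix.cons_val_four]
  exact ⟨h, h ▸ two_ne_zero⟩
end
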